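/- Let n be a positive integer and let π, ρ ∈ NC(n) be such that θ := π^(odd) ∪ ρ^(even) is a (parity-preserving) partition in NC(2n). If θ has exactly two outer blocks and every non-outer block A of θ has Parent_θ(A) of parity opposite from the parity of A, then ρ = K(π). -/

import Mathlib

open Finset

attribute [local instance] Classical.propDecidable

open scoped ComplexOrder

namespace BBP

/-- Partitions of `{1,…,m}` modeled as `Finpartition`s of `univ : Finset (Fin m)`. -/
abbrev FP (m : ℕ) := Finpartition (Finset.univ : Finset (Fin m))

noncomputable instance (m : ℕ) : Fintype (FP m) :=
  Fintype.ofInjective (fun π : FP m => π.parts) fun a b h => by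
    cases a; cases b; simpa using h

/-- `x` is the minimum of the set `C`. -/
def IsMinOf {m : ℕ} (x : Fin m) (C : Finset (Fin m)) : Prop :=
  x ∈ C ∧ ∀ y ∈ C, x ≤ y

/-- `x` is the maximum of the set `C`. -/
def IsMaxOf {m : ℕ} (x : Fin m) (C : Finset (Fin m)) : Prop :=
  x ∈ C ∧ ∀ y ∈ C, y ≤ x

/-- `a` and `b` lie in one block of `π`. -/
def SameBlock {m : ℕ} (π : FP m) (a b : Fin m) : Prop :=
  ∃ B ∈ π.parts, a ∈ B ∧ b ∈ B

/-- `π` is non-crossing: if `i<j<k<l`, `i,k` in one block and `j,l` in one block,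
then all of them are in one block. -/
def IsNC {m : ℕ} (π : FP m) : Prop :=
  ∀ i j k l : Fin m, i < j → j < k → k < l →
    SameBlock π i k → SameBlock π j l → SameBlock π i j

/-- `A` embraces `B` : `min A ≤ min B` and `max B ≤ max A`. -/
def Embraces {m : ℕ} (A B : Finset (Fin m)) : Prop :=
  ∃ a₁ a₂ b₁ b₂ : Fin m, IsMinOf a₁ A ∧ IsMaxOf a₂ A ∧ IsMinOf b₁ B ∧ IsMaxOf b₂ B ∧
    a₁ ≤ b₁ ∧ b₂ ≤ a₂

/-- `B` strictly embraces `A` : `min B < min A` and `max A < max B`. -/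
def StrictlyEmbraces {m : ℕ} (B A : Finset (Fin m)) : Prop :=
  ∃ b₁ b₂ a₁ a₂ : Fin m, IsMinOf b₁ B ∧ IsMaxOf b₂ B ∧ IsMinOf a₁ A ∧ IsMaxOf a₂ A ∧
    b₁ < a₁ ∧ a₂ < b₂

/-- `A` is an outer block of `π`. -/
def IsOuter {m : ℕ} (π : FP m) (A : Finset (Fin m)) : Prop :=
  A ∈ π.parts ∧ ¬ ∃ B ∈ π.parts, StrictlyEmbraces B A

/-- The number `|π|_out` of outer blocks of `π`. -/
noncomputable def numOuter {m : ℕ} (π : FP m) : ℕ :=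
  (π.parts.filter fun A => IsOuter π A).card

/-- Reversed refinement order: every block of `ρ` is a union of blocks of `π`. -/
def Refines {m : ℕ} (π ρ : FP m) : Prop :=
  ∀ B ∈ π.parts, ∃ C ∈ ρ.parts, B ⊆ C

/-- The partial order `π ≪ ρ`. -/
def Ll {m : ℕ} (π ρ : FP m) : Prop :=
  Refines π ρ ∧
    ∀ C ∈ ρ.parts, ∃ B ∈ π.parts, ∃ x y : Fin m,
      IsMinOf x C ∧ IsMaxOf y C ∧ x ∈ B ∧ y ∈ B

/-- The partition `1ₙ` of `{1,…,n+1}` with a single block. -/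
noncomputable def fullPart (n : ℕ) : FP (n+1) :=
  Finpartition.indiscrete (by simpa using (Finset.univ_nonempty (α := Fin (n+1))).ne_empty)

/-- `π` is an interval partition. -/
def IsIntervalPartition {m : ℕ} (π : FP m) : Prop :=
  ∀ B ∈ π.parts, ∀ x ∈ B, ∀ z ∈ B, ∀ y : Fin m, x ≤ y → y ≤ z → y ∈ B

/-- `σ` is the permutation associated to `π` : on each block `{b₁ < ⋯ < b_q}` it is the
cycle `b₁ ↦ b₂ ↦ ⋯ ↦ b_q ↦ b₁`. -/
def IsAssocPerm {m : ℕ} (π : FP m) (σ : Equiv.Perm (Fin m)) : Prop :=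
  ∀ B ∈ π.parts, ∀ b ∈ B, σ b ∈ B ∧
    ((b < σ b ∧ ∀ x ∈ B, b < x → σ b ≤ x) ∨ (IsMaxOf b B ∧ IsMinOf (σ b) B))

/-- `κ` is the Kreweras complement of `π`, characterized by `P_κ = P_π⁻¹ ∘ P_{1ₙ}`,
where `P_{1ₙ}` is the cycle `1 ↦ 2 ↦ ⋯ ↦ n ↦ 1` (i.e. `finRotate`). -/
def IsKrewerasPair {m : ℕ} (π κ : FP m) : Prop :=
  ∃ σπ σκ : Equiv.Perm (Fin m), IsAssocPerm π σπ ∧ IsAssocPerm κ σκ ∧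
    σκ = σπ⁻¹ * finRotate m

/-- the element `2a-1` of `{1,…,2n}`, in `Fin (2n)` (0-indexed). -/
def oddEmb {n : ℕ} (a : Fin n) : Fin (2*n) := ⟨2*a.val, by have := a.isLt; omega⟩

/-- the element `2a` of `{1,…,2n}`, in `Fin (2n)` (0-indexed). -/
def evenEmb {n : ℕ} (a : Fin n) : Fin (2*n) := ⟨2*a.val + 1, by have := a.isLt; omega⟩

/-- `θ = π^(odd) ∪ ρ^(even)` : the blocks of `θ` are the sets `{2a-1 : a ∈ A}` for `A`
a block of `π` and the sets `{2b : b ∈ B}` for `B` a block of `ρ`. -/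
def IsOddEvenJoin {n : ℕ} (π ρ : FP n) (θ : FP (2*n)) : Prop :=
  θ.parts = π.parts.image (fun B => B.image oddEmb) ∪
    ρ.parts.image (fun B => B.image evenEmb)

/-- a block consisting of odd elements of `{1,…,2n}` (even 0-indexed values). -/
def OddBlock {m : ℕ} (B : Finset (Fin m)) : Prop := ∀ x ∈ B, x.val % 2 = 0

/-- a block consisting of even elements of `{1,…,2n}` (odd 0-indexed values). -/
def EvenBlock {m : ℕ} (B : Finset (Fin m)) : Prop := ∀ x ∈ B, x.val % 2 = 1

/-- every block of `θ` is contained in the odds or in the evens. -/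
def ParityPreserving {m : ℕ} (θ : FP m) : Prop :=
  ∀ B ∈ θ.parts, OddBlock B ∨ EvenBlock B

def OppositeParity {m : ℕ} (A B : Finset (Fin m)) : Prop :=
  (OddBlock A ∧ EvenBlock B) ∨ (EvenBlock A ∧ OddBlock B)

def SameParity {m : ℕ} (A B : Finset (Fin m)) : Prop :=
  (OddBlock A ∧ OddBlock B) ∨ (EvenBlock A ∧ EvenBlock B)

/-- `P = Parent_θ(A)` : the unique block `P ≠ A` of `θ` embracing `A` such that every
block `A' ≠ A` of `θ` embracing `A` also embraces `P`. -/
def IsParent {m : ℕ} (θ : FP m) (A P : Finset (Fin m)) : Prop :=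
  P ∈ θ.parts ∧ P ≠ A ∧ Embraces P A ∧
    ∀ A' ∈ θ.parts, A' ≠ A → Embraces A' A → Embraces A' P

/-- `θ` has exactly two outer blocks. -/
def ExactlyTwoOuterBlocks {m : ℕ} (θ : FP m) : Prop :=
  ∃ M ∈ θ.parts, ∃ N ∈ θ.parts, M ≠ N ∧ IsOuter θ M ∧ IsOuter θ N ∧
    ∀ A ∈ θ.parts, IsOuter θ A → A = M ∨ A = N

/-- A series in `ℂ₀⟨⟨z₁,…,z_k⟩⟩`, given by its family of coefficients: `f n w` is the
coefficient of `z_{w 0} z_{w 1} ⋯ z_{w n}` (a word of length `n+1 ≥ 1`). -/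
abbrev NCSeries (k : ℕ) := (n : ℕ) → (Fin (n+1) → Fin k) → ℂ

/-- The coefficient `Cf_{w|B}(f)` of the restriction of the word `w` to the set `B`,
listing the elements of `B` in increasing order.  (Equals `1` for `B = ∅`.) -/
noncomputable def partCoeff {k m : ℕ} (f : NCSeries k) (w : Fin (m+1) → Fin k)
    (B : Finset (Fin (m+1))) : ℂ :=
  if h : B.Nonempty then
    f (B.card - 1) (fun j =>
      w ((B.orderIsoOfFin (Nat.succ_pred_eq_of_pos (Finset.card_pos.mpr h)).symm j).1))
  else 1

/-- The generalized coefficient `Cf_{w;π}(f) = ∏_{B block of π} Cf_{w|B}(f)`. -/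
noncomputable def genCoeff {k m : ℕ} (f : NCSeries k) (w : Fin (m+1) → Fin k)
    (π : FP (m+1)) : ℂ :=
  ∏ B ∈ π.parts, partCoeff f w B

/-- Linear functionals on `ℂ⟨X₁,…,X_k⟩`. -/
abbrev Dist (k : ℕ) := FreeAlgebra ℂ (Fin k) →ₗ[ℂ] ℂ

/-- `μ ∈ D_alg(k)` : `μ` is normalized by `μ(1) = 1`. -/
def IsDalg {k : ℕ} (μ : Dist k) : Prop := μ 1 = 1

/-- The moment series `M_μ`, with `(momentSeries μ) n w = μ (X_{w 0} ⋯ X_{w n})`. -/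
noncomputable def momentSeries {k : ℕ} (μ : Dist k) : NCSeries k :=
  fun _ w => μ ((List.ofFn fun j => FreeAlgebra.ι ℂ (w j)).prod)

/-- `f = R_μ` : the moments of `μ` are obtained from `f` by summation over all
non-crossing partitions. -/
def IsRTransform {k : ℕ} (μ : Dist k) (f : NCSeries k) : Prop :=
  ∀ (n : ℕ) (w : Fin (n+1) → Fin k),
    momentSeries μ n w = ∑ π : FP (n+1), if IsNC π then genCoeff f w π else 0

/-- `g = η_μ` : the moments of `μ` are obtained from `g` by summation over all
interval partitions. -/
def IsEtaSeries {k : ℕ} (μ : Dist k) (g : NCSeries k) : Prop :=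
  ∀ (n : ℕ) (w : Fin (n+1) → Fin k),
    momentSeries μ n w = ∑ π : FP (n+1), if IsIntervalPartition π then genCoeff g w π else 0

/-- `μ ∈ D_c(k)` : `μ` is the joint distribution of a `k`-tuple of selfadjoint elements
with respect to a state on a unital C*-algebra. -/
def IsDc {k : ℕ} (μ : Dist k) : Prop :=
  IsDalg μ ∧
  ∃ (A : Type) (_ : NormedRing A) (_ : StarRing A) (_ : CStarRing A)
    (_ : NormedAlgebra ℂ A) (_ : StarModule ℂ A) (_ : CompleteSpace A)
    (φ : A →ₗ[ℂ] ℂ) (x : Fin k → A),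
      φ 1 = 1 ∧ (∀ a : A, 0 ≤ φ (star a * a)) ∧ (∀ i, IsSelfAdjoint (x i)) ∧
      ∀ (n : ℕ) (w : Fin (n+1) → Fin k),
        momentSeries μ n w = φ ((List.ofFn fun j => x (w j)).prod)

/-- convergence in moments. -/
def ConvInMoments {k : ℕ} (μseq : ℕ → Dist k) (μ : Dist k) : Prop :=
  ∀ P : FreeAlgebra ℂ (Fin k),
    Filter.Tendsto (fun N => μseq N P) Filter.atTop (nhds (μ P))

/-- coefficientwise convergence of series. -/
def ConvCoeffwise {k : ℕ} (fseq : ℕ → NCSeries k) (f : NCSeries k) : Prop :=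
  ∀ (n : ℕ) (w : Fin (n+1) → Fin k),
    Filter.Tendsto (fun N => fseq N n w) Filter.atTop (nhds (f n w))

/-- `ν` is the `p`-fold free additive convolution `μ ⊞ ⋯ ⊞ μ`, i.e. `R_ν = p · R_μ`. -/
def IsNFoldFree {k : ℕ} (p : ℕ) (μ ν : Dist k) : Prop :=
  ∃ f : NCSeries k, IsRTransform μ f ∧ IsRTransform ν (fun n w => (p : ℂ) * f n w)

/-- `ν` is the `p`-fold Boolean convolution `μ ⊎ ⋯ ⊎ μ`, i.e. `η_ν = p · η_μ`. -/
def IsNFoldBool {k : ℕ} (p : ℕ) (μ ν : Dist k) : Prop :=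
  ∃ g : NCSeries k, IsEtaSeries μ g ∧ IsEtaSeries ν (fun n w => (p : ℂ) * g n w)

/-- `ν = 𝔹(μ)` : the Boolean Bercovici–Pata bijection, `R_{𝔹(μ)} = η_μ`. -/
def IsBP {k : ℕ} (μ ν : Dist k) : Prop :=
  ∃ f : NCSeries k, IsEtaSeries μ f ∧ IsRTransform ν f

/-- `μ ∈ D_c(k)` is infinitely divisible with respect to `⊞`. -/
def IsInfDiv {k : ℕ} (μ : Dist k) : Prop :=
  IsDc μ ∧ ∀ N : ℕ, 0 < N → ∃ ν : Dist k, IsDc ν ∧ IsNFoldFree N ν μ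

/-- `g = Reta(f)`, i.e. there is `μ ∈ D_alg(k)` with `f = R_μ` and `g = η_μ`. -/
def RetaRel {k : ℕ} (f g : NCSeries k) : Prop :=
  ∃ μ : Dist k, IsDalg μ ∧ IsRTransform μ f ∧ IsEtaSeries μ g


/- ===== auxiliary infrastructure for statement15 ===== -/
section Infra
variable {k : ℕ}

lemma isMinOf_min' (B : Finset (Fin k)) (h : B.Nonempty) : IsMinOf (B.min' h) B :=
  ⟨B.min'_mem h, fun y hy => B.min'_le y hy⟩

lemma isMaxOf_max' (B : Finset (Fin k)) (h : B.Nonempty) : IsMaxOf (B.max' h) B :=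
  ⟨B.max'_mem h, fun y hy => B.le_max' y hy⟩

lemma IsMinOf.eq_min' {x : Fin k} {B : Finset (Fin k)} (hx : IsMinOf x B) (h : B.Nonempty) :
    x = B.min' h :=
  le_antisymm (hx.2 _ (B.min'_mem h)) (B.min'_le x hx.1)

lemma IsMaxOf.eq_max' {x : Fin k} {B : Finset (Fin k)} (hx : IsMaxOf x B) (h : B.Nonempty) :
    x = B.max' h :=
  le_antisymm (B.le_max' x hx.1) (hx.2 _ (B.max'_mem h))

lemma embraces_iff {A B : Finset (Fin k)} (hA : A.Nonempty) (hB : B.Nonempty) :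
    Embraces A B ↔ A.min' hA ≤ B.min' hB ∧ B.max' hB ≤ A.max' hA := by
  constructor
  · rintro ⟨a₁, a₂, b₁, b₂, h1, h2, h3, h4, h5, h6⟩
    rw [h1.eq_min' hA] at h5; rw [h2.eq_max' hA] at h6
    rw [h3.eq_min' hB] at h5; rw [h4.eq_max' hB] at h6
    exact ⟨h5, h6⟩
  · rintro ⟨h5, h6⟩
    exact ⟨_, _, _, _, isMinOf_min' A hA, isMaxOf_max' A hA, isMinOf_min' B hB,
      isMaxOf_max' B hB, h5, h6⟩

lemma strictlyEmbraces_iff {A B : Finset (Fin k)} (hA : A.Nonempty) (hB : B.Nonempty) :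
    StrictlyEmbraces B A ↔ B.min' hB < A.min' hA ∧ A.max' hA < B.max' hB := by
  constructor
  · rintro ⟨b₁, b₂, a₁, a₂, h1, h2, h3, h4, h5, h6⟩
    rw [h1.eq_min' hB] at h5; rw [h2.eq_max' hB] at h6
    rw [h3.eq_min' hA] at h5; rw [h4.eq_max' hA] at h6
    exact ⟨h5, h6⟩
  · rintro ⟨h5, h6⟩
    exact ⟨_, _, _, _, isMinOf_min' B hB, isMaxOf_max' B hB, isMinOf_min' A hA,
      isMaxOf_max' A hA, h5, h6⟩

lemma embraces_refl {A : Finset (Fin k)} (hA : A.Nonempty) : Embraces A A :=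
  (embraces_iff hA hA).2 ⟨le_refl _, le_refl _⟩

/-- basic: two parts sharing an element are equal -/
lemma parts_eq {s : Finset (Fin k)} {P : Finpartition s} {X Y : Finset (Fin k)}
    (hX : X ∈ P.parts) (hY : Y ∈ P.parts) {a : Fin k} (ha : a ∈ X) (hb : a ∈ Y) : X = Y :=
  P.eq_of_mem_parts hX hY ha hb

/-- the crossing lemma for a non-crossing partition, blockwise -/
lemma crossNC {P : FP k} (hNC : IsNC P) {X Y : Finset (Fin k)}
    (hX : X ∈ P.parts) (hY : Y ∈ P.parts) {i j l m : Fin k}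
    (hi : i ∈ X) (hl : l ∈ X) (hj : j ∈ Y) (hm : m ∈ Y)
    (h1 : i < j) (h2 : j < l) (h3 : l < m) : X = Y := by
  obtain ⟨Z, hZ, hiZ, hjZ⟩ := hNC i j l m h1 h2 h3 ⟨X, hX, hi, hl⟩ ⟨Y, hY, hj, hm⟩
  exact (parts_eq hX hZ hi hiZ).trans (parts_eq hZ hY hjZ hj)

end Infra

section Parent
variable {m : ℕ} {θ : FP m}

lemma min'_injective {X Y : Finset (Fin m)} (hX : X ∈ θ.parts) (hY : Y ∈ θ.parts)
    (hXne : X.Nonempty) (hYne : Y.Nonempty) (h : X.min' hXne = Y.min' hYne) : X = Y :=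
  parts_eq hX hY (X.min'_mem hXne) (h ▸ Y.min'_mem hYne)

lemma max'_injective {X Y : Finset (Fin m)} (hX : X ∈ θ.parts) (hY : Y ∈ θ.parts)
    (hXne : X.Nonempty) (hYne : Y.Nonempty) (h : X.max' hXne = Y.max' hYne) : X = Y :=
  parts_eq hX hY (X.max'_mem hXne) (h ▸ Y.max'_mem hYne)

/-- blocks embracing a fixed block form a chain -/
lemma embrace_chain (hNC : IsNC θ) {A X Y : Finset (Fin m)}
    (hA : A ∈ θ.parts) (hX : X ∈ θ.parts) (hY : Y ∈ θ.parts)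
    (hXA : X ≠ A) (hYA : Y ≠ A) (hXY : X ≠ Y)
    (hXe : Embraces X A) (hYe : Embraces Y A) : Embraces X Y ∨ Embraces Y X := by
  have hAne := θ.nonempty_of_mem_parts hA
  have hXne := θ.nonempty_of_mem_parts hX
  have hYne := θ.nonempty_of_mem_parts hY
  rw [embraces_iff hXne hAne] at hXe
  rw [embraces_iff hYne hAne] at hYe
  have hminXA : X.min' hXne < A.min' hAne :=
    lt_of_le_of_ne hXe.1 (fun h => hXA (min'_injective hX hA hXne hAne h))
  have hminYA : Y.min' hYne < A.min' hAne :=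
    lt_of_le_of_ne hYe.1 (fun h => hYA (min'_injective hY hA hYne hAne h))
  have hmaxXA : A.max' hAne < X.max' hXne :=
    lt_of_le_of_ne hXe.2 (fun h => hXA (parts_eq hA hX (A.max'_mem hAne)
      (by rw [h]; exact X.max'_mem hXne)).symm)
  have hmaxYA : A.max' hAne < Y.max' hYne :=
    lt_of_le_of_ne hYe.2 (fun h => hYA (parts_eq hA hY (A.max'_mem hAne)
      (by rw [h]; exact Y.max'_mem hYne)).symm)
  have hminne : X.min' hXne ≠ Y.min' hYne := fun h => hXY (min'_injective hX hY hXne hYne h)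
  rcases lt_or_gt_of_ne hminne with hlt | hgt
  · -- min X < min Y ; if max Y ≤ max X then X embraces Y else crossing
    rcases le_or_gt (Y.max' hYne) (X.max' hXne) with hle | hlt2
    · exact Or.inl ((embraces_iff hXne hYne).2 ⟨le_of_lt hlt, hle⟩)
    · exfalso
      have := crossNC hNC hX hY (X.min'_mem hXne) (X.max'_mem hXne)
        (Y.min'_mem hYne) (Y.max'_mem hYne) hlt
        (lt_trans hminYA (lt_of_le_of_lt (A.min'_le _ (A.max'_mem hAne)) hmaxXA)) hlt2
      exact hXY this
  · rcases le_or_gt (X.max' hXne) (Y.max' hYne) with hle | hlt2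
    · exact Or.inr ((embraces_iff hYne hXne).2 ⟨le_of_lt hgt, hle⟩)
    · exfalso
      have := crossNC hNC hY hX (Y.min'_mem hYne) (Y.max'_mem hYne)
        (X.min'_mem hXne) (X.max'_mem hXne) hgt
        (lt_trans hminXA (lt_of_le_of_lt (A.min'_le _ (A.max'_mem hAne)) hmaxYA)) hlt2
      exact hXY this.symm

lemma parent_exists (hNC : IsNC θ) {A : Finset (Fin m)} (hA : A ∈ θ.parts)
    (h : ∃ X ∈ θ.parts, StrictlyEmbraces X A) : ∃ P, IsParent θ A P := by
  classical
  have hAne := θ.nonempty_of_mem_parts hA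
  set S : Finset (Finset (Fin m)) := θ.parts.filter (fun X => X ≠ A ∧ Embraces X A) with hS
  have hmemS : ∀ X, X ∈ S ↔ X ∈ θ.parts ∧ X ≠ A ∧ Embraces X A := by
    intro X; simp [hS, Finset.mem_filter]
  have hSne : S.Nonempty := by
    obtain ⟨X, hX, hstr⟩ := h
    have hXne := θ.nonempty_of_mem_parts hX
    rw [strictlyEmbraces_iff hAne hXne] at hstr
    refine ⟨X, (hmemS X).2 ⟨hX, ?_, (embraces_iff hXne hAne).2 ⟨le_of_lt hstr.1, le_of_lt hstr.2⟩⟩⟩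
    intro hXA
    subst hXA
    exact lt_irrefl _ hstr.1
  -- pick the element of S with maximal min'
  obtain ⟨X₀, hX₀S, hmax⟩ := S.exists_max_image
    (fun X => if h : X.Nonempty then (X.min' h).val else 0) hSne
  have hX₀ := ((hmemS X₀).1 hX₀S).1
  have hX₀A := ((hmemS X₀).1 hX₀S).2.1
  have hX₀e := ((hmemS X₀).1 hX₀S).2.2
  have hX₀ne := θ.nonempty_of_mem_parts hX₀
  refine ⟨X₀, hX₀, hX₀A, hX₀e, ?_⟩
  intro Y hY hYA hYe
  by_cases hYX : Y = X₀
  · subst hYX; exact embraces_refl (θ.nonempty_of_mem_parts hY)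
  have hYS : Y ∈ S := (hmemS Y).2 ⟨hY, hYA, hYe⟩
  have hYne := θ.nonempty_of_mem_parts hY
  rcases embrace_chain hNC hA hX₀ hY hX₀A hYA (Ne.symm hYX) hX₀e hYe with h1 | h1
  · exfalso
    -- X₀ embraces Y, but Y.min ≤ X₀.min forces equality
    have h2 : X₀.min' hX₀ne ≤ Y.min' hYne := ((embraces_iff hX₀ne hYne).1 h1).1
    have h3 := hmax Y hYS
    rw [dif_pos hYne, dif_pos hX₀ne] at h3
    have h4 : Y.min' hYne ≤ X₀.min' hX₀ne := Fin.le_def.mpr h3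
    exact hYX (min'_injective hY hX₀ hYne hX₀ne (le_antisymm h4 h2))
  · exact h1

end Parent

section Join
variable {n : ℕ}

lemma oddEmb_injective : Function.Injective (oddEmb (n := n)) := by
  intro a b h
  have h2 : 2 * a.val = 2 * b.val := congrArg Fin.val h
  exact Fin.ext (by omega)

lemma evenEmb_injective : Function.Injective (evenEmb (n := n)) := by
  intro a b h
  have h2 : 2 * a.val + 1 = 2 * b.val + 1 := congrArg Fin.val h
  exact Fin.ext (by omega)

lemma oddBlock_image (A : Finset (Fin n)) : OddBlock (A.image oddEmb) := by
  intro x hx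
  obtain ⟨a, _, rfl⟩ := Finset.mem_image.1 hx
  show 2 * a.val % 2 = 0
  omega

lemma evenBlock_image (A : Finset (Fin n)) : EvenBlock (A.image evenEmb) := by
  intro x hx
  obtain ⟨a, _, rfl⟩ := Finset.mem_image.1 hx
  show (2 * a.val + 1) % 2 = 1
  omega

lemma odd_ne_even {X Y : Finset (Fin (2*n))} (hX : OddBlock X) (hY : EvenBlock Y)
    (hne : X.Nonempty) : X ≠ Y := by
  rintro rfl
  obtain ⟨x, hx⟩ := hne
  have h1 := hX x hx
  have h2 := hY x hx
  omega

variable {π ρ : FP n} {θ : FP (2*n)} (hθ : IsOddEvenJoin π ρ θ)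
include hθ

lemma oddPart_mem {A : Finset (Fin n)} (hA : A ∈ π.parts) : A.image oddEmb ∈ θ.parts := by
  have h : θ.parts = _ := hθ
  rw [h]
  exact Finset.mem_union_left _ (Finset.mem_image_of_mem _ hA)

lemma evenPart_mem {A : Finset (Fin n)} (hA : A ∈ ρ.parts) : A.image evenEmb ∈ θ.parts := by
  have h : θ.parts = _ := hθ
  rw [h]
  exact Finset.mem_union_right _ (Finset.mem_image_of_mem _ hA)

lemma part_oddEmb (a : Fin n) : θ.part (oddEmb a) = (π.part a).image oddEmb :=
  parts_eq (θ.part_mem.2 (Finset.mem_univ _)) (oddPart_mem hθ (π.part_mem.2 (Finset.mem_univ _)))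
    (θ.mem_part (Finset.mem_univ _)) (Finset.mem_image_of_mem _ (π.mem_part (Finset.mem_univ _)))

lemma part_evenEmb (b : Fin n) : θ.part (evenEmb b) = (ρ.part b).image evenEmb :=
  parts_eq (θ.part_mem.2 (Finset.mem_univ _)) (evenPart_mem hθ (ρ.part_mem.2 (Finset.mem_univ _)))
    (θ.mem_part (Finset.mem_univ _)) (Finset.mem_image_of_mem _ (ρ.mem_part (Finset.mem_univ _)))

lemma parts_cases {X : Finset (Fin (2*n))} (hX : X ∈ θ.parts) :
    (∃ A ∈ π.parts, X = A.image oddEmb) ∨ (∃ A ∈ ρ.parts, X = A.image evenEmb) := by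
  have h : θ.parts = _ := hθ
  rw [h] at hX
  rcases Finset.mem_union.1 hX with h1 | h1
  · obtain ⟨A, hA, rfl⟩ := Finset.mem_image.1 h1
    exact Or.inl ⟨A, hA, rfl⟩
  · obtain ⟨A, hA, rfl⟩ := Finset.mem_image.1 h1
    exact Or.inr ⟨A, hA, rfl⟩

/-- mixed non-crossing: pattern odd ≤ even < odd ≤ even is impossible -/
lemma noMix1 (hθNC : IsNC θ) {A B : Finset (Fin n)} (hA : A ∈ π.parts) (hB : B ∈ ρ.parts)
    {a₁ a₂ b₁ b₂ : Fin n} (ha₁ : a₁ ∈ A) (ha₂ : a₂ ∈ A) (hb₁ : b₁ ∈ B) (hb₂ : b₂ ∈ B)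
    (h1 : a₁ ≤ b₁) (h2 : b₁ < a₂) (h3 : a₂ ≤ b₂) : False := by
  have hc := crossNC hθNC (oddPart_mem hθ hA) (evenPart_mem hθ hB)
    (Finset.mem_image_of_mem _ ha₁) (Finset.mem_image_of_mem _ ha₂)
    (Finset.mem_image_of_mem _ hb₁) (Finset.mem_image_of_mem _ hb₂)
    (show oddEmb a₁ < evenEmb b₁ by
      simp only [Fin.lt_def, oddEmb, evenEmb]; have := Fin.le_def.1 h1; omega)
    (show evenEmb b₁ < oddEmb a₂ by
      simp only [Fin.lt_def, oddEmb, evenEmb]; have := Fin.lt_def.1 h2; omega)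
    (show oddEmb a₂ < evenEmb b₂ by
      simp only [Fin.lt_def, oddEmb, evenEmb]; have := Fin.le_def.1 h3; omega)
  exact odd_ne_even (oddBlock_image A) (evenBlock_image B) ⟨_, Finset.mem_image_of_mem _ ha₁⟩ hc

/-- mixed non-crossing: pattern even < odd ≤ even < odd is impossible -/
lemma noMix2 (hθNC : IsNC θ) {A B : Finset (Fin n)} (hA : A ∈ π.parts) (hB : B ∈ ρ.parts)
    {a₁ a₂ b₁ b₂ : Fin n} (ha₁ : a₁ ∈ A) (ha₂ : a₂ ∈ A) (hb₁ : b₁ ∈ B) (hb₂ : b₂ ∈ B)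
    (h1 : b₁ < a₁) (h2 : a₁ ≤ b₂) (h3 : b₂ < a₂) : False := by
  have hc := crossNC hθNC (evenPart_mem hθ hB) (oddPart_mem hθ hA)
    (Finset.mem_image_of_mem _ hb₁) (Finset.mem_image_of_mem _ hb₂)
    (Finset.mem_image_of_mem _ ha₁) (Finset.mem_image_of_mem _ ha₂)
    (show evenEmb b₁ < oddEmb a₁ by
      simp only [Fin.lt_def, oddEmb, evenEmb]; have := Fin.lt_def.1 h1; omega)
    (show oddEmb a₁ < evenEmb b₂ by
      simp only [Fin.lt_def, oddEmb, evenEmb]; have := Fin.le_def.1 h2; omega)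
    (show evenEmb b₂ < oddEmb a₂ by
      simp only [Fin.lt_def, oddEmb, evenEmb]; have := Fin.lt_def.1 h3; omega)
  exact odd_ne_even (oddBlock_image A) (evenBlock_image B) ⟨_, Finset.mem_image_of_mem _ ha₁⟩ hc.symm

/-- every block avoiding the two extreme points has a strict embracer -/
lemma exists_strict (hn : 0 < n) (h2 : ExactlyTwoOuterBlocks θ)
    {X : Finset (Fin (2*n))} (hX : X ∈ θ.parts)
    (hz : (⟨0, by omega⟩ : Fin (2*n)) ∉ X) (hw : (⟨2*n-1, by omega⟩ : Fin (2*n)) ∉ X) :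
    ∃ Y ∈ θ.parts, StrictlyEmbraces Y X := by
  by_contra hcon
  have hXouter : IsOuter θ X := ⟨hX, by
    intro ⟨Y, hY, hS⟩
    exact hcon ⟨Y, hY, hS⟩⟩
  set z : Fin (2*n) := ⟨0, by omega⟩ with hzdef
  set w : Fin (2*n) := ⟨2*n-1, by omega⟩ with hwdef
  have hzu : z ∈ (Finset.univ : Finset (Fin (2*n))) := Finset.mem_univ _
  have hwu : w ∈ (Finset.univ : Finset (Fin (2*n))) := Finset.mem_univ _
  set Z := θ.part z with hZdef
  set W := θ.part w with hWdef
  have hZ : Z ∈ θ.parts := θ.part_mem.2 hzu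
  have hW : W ∈ θ.parts := θ.part_mem.2 hwu
  have hzZ : z ∈ Z := θ.mem_part hzu
  have hwW : w ∈ W := θ.mem_part hwu
  have hZouter : IsOuter θ Z := by
    refine ⟨hZ, ?_⟩
    rintro ⟨Y, hY, hS⟩
    have hYne := θ.nonempty_of_mem_parts hY
    have hZne := θ.nonempty_of_mem_parts hZ
    have := ((strictlyEmbraces_iff hZne hYne).1 hS).1
    have h0 : Z.min' hZne ≤ z := Z.min'_le z hzZ
    have a1 := Fin.lt_def.1 (lt_of_lt_of_le this h0)
    simp [hzdef] at a1
  have hWouter : IsOuter θ W := by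
    refine ⟨hW, ?_⟩
    rintro ⟨Y, hY, hS⟩
    have hYne := θ.nonempty_of_mem_parts hY
    have hWne := θ.nonempty_of_mem_parts hW
    have h1 := ((strictlyEmbraces_iff hWne hYne).1 hS).2
    have h0 : w ≤ W.max' hWne := W.le_max' w hwW
    have h3 : (w : Fin (2*n)).val < (Y.max' hYne).val := Fin.lt_def.1 (lt_of_le_of_lt h0 h1)
    have h4 := (Y.max' hYne).isLt
    simp only [hwdef] at h3
    omega
  have hZW : Z ≠ W := by
    intro h
    rcases parts_cases hθ hZ with ⟨A, _, him⟩ | ⟨A, _, him⟩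
    · have hodd : OddBlock Z := him ▸ oddBlock_image A
      have := hodd w (h ▸ hwW)
      simp only [hwdef] at this
      omega
    · have heven : EvenBlock Z := him ▸ evenBlock_image A
      have := heven z hzZ
      simp only [hzdef] at this
      omega
  obtain ⟨M, hM, N, hN, hMN, hMo, hNo, huniq⟩ := h2
  have hZMN := huniq Z hZ hZouter
  have hWMN := huniq W hW hWouter
  have hXMN := huniq X hX hXouter
  have hXz : z ∉ X := hz
  have hXw : w ∉ X := hw
  rcases hZMN with hZM | hZN
  · rcases hWMN with hWM | hWN
    · exact hZW (hZM.trans hWM.symm)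
    · rcases hXMN with hXM | hXN
      · exact hXz (hXM.trans hZM.symm ▸ hzZ)
      · exact hXw (hXN.trans hWN.symm ▸ hwW)
  · rcases hWMN with hWM | hWN
    · rcases hXMN with hXM | hXN
      · exact hXw (hXM.trans hWM.symm ▸ hwW)
      · exact hXz (hXN.trans hZN.symm ▸ hzZ)
    · exact hZW (hZN.trans hWN.symm)

end Join

section Assoc
variable {k : ℕ}

noncomputable def assocFun (P : FP k) (b : Fin k) : Fin k :=
  if h : ((P.part b).filter (fun x => b < x)).Nonempty then
    ((P.part b).filter (fun x => b < x)).min' h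
  else (P.part b).min' ⟨b, P.mem_part (Finset.mem_univ b)⟩

lemma assocFun_mem (P : FP k) (b : Fin k) : assocFun P b ∈ P.part b := by
  unfold assocFun
  split
  · next h => exact (Finset.mem_filter.1 (Finset.min'_mem _ h)).1
  · exact Finset.min'_mem _ _

lemma assocFun_spec (P : FP k) (b : Fin k) :
    (b < assocFun P b ∧ ∀ x ∈ P.part b, b < x → assocFun P b ≤ x) ∨
    (IsMaxOf b (P.part b) ∧ IsMinOf (assocFun P b) (P.part b)) := by
  unfold assocFun
  split
  · next h =>
    left
    constructor
    · exact (Finset.mem_filter.1 (Finset.min'_mem _ h)).2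
    · intro x hx hbx
      exact Finset.min'_le _ x (Finset.mem_filter.2 ⟨hx, hbx⟩)
  · next h =>
    right
    refine ⟨⟨P.mem_part (Finset.mem_univ b), ?_⟩, Finset.min'_mem _ _, fun y hy => Finset.min'_le _ y hy⟩
    intro y hy
    by_contra hby
    exact h ⟨y, Finset.mem_filter.2 ⟨hy, lt_of_not_ge hby⟩⟩

lemma assocFun_eq_of_wrap {P : FP k} {b s : Fin k} (hs : s ∈ P.part b)
    (hmax : ∀ x ∈ P.part b, x ≤ b) (hmin : ∀ x ∈ P.part b, s ≤ x) : assocFun P b = s := by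
  rcases assocFun_spec P b with ⟨h1, _⟩ | ⟨_, h3⟩
  · exact absurd (hmax _ (assocFun_mem P b)) (not_le.2 h1)
  · exact le_antisymm (h3.2 s hs) (hmin _ h3.1)

lemma assocFun_eq_of_next {P : FP k} {b s : Fin k} (hs : s ∈ P.part b) (hbs : b < s)
    (hmin : ∀ x ∈ P.part b, b < x → s ≤ x) : assocFun P b = s := by
  rcases assocFun_spec P b with ⟨h1, h2⟩ | ⟨h3, _⟩
  · exact le_antisymm (h2 s hs hbs) (hmin _ (assocFun_mem P b) h1)
  · exact absurd (h3.2 s hs) (not_le.2 hbs)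

lemma assocFun_inj (P : FP k) : Function.Injective (assocFun P) := by
  intro a b h
  by_contra hab
  have hEq : P.part a = P.part b := by
    refine parts_eq (P.part_mem.2 (Finset.mem_univ a)) (P.part_mem.2 (Finset.mem_univ b))
      (assocFun_mem P a) ?_
    rw [h]; exact assocFun_mem P b
  have hbB : b ∈ P.part a := hEq ▸ P.mem_part (Finset.mem_univ b)
  have haA : a ∈ P.part a := P.mem_part (Finset.mem_univ a)
  rcases assocFun_spec P a with ⟨ha1, ha2⟩ | ⟨ha3, ha4⟩ <;>
    rcases assocFun_spec P b with ⟨hb1, hb2⟩ | ⟨hb3, hb4⟩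
  · -- both strictly above
    rcases lt_or_gt_of_ne (fun hh : a = b => hab hh) with hlt | hgt
    · have := ha2 b hbB hlt
      rw [h] at this
      exact absurd hb1 (not_lt.2 this)
    · have := hb2 a (hEq ▸ haA) hgt
      rw [← h] at this
      exact absurd ha1 (not_lt.2 this)
  · -- a-next, b-wrap : assocFun b is min of common block
    have h4 : IsMinOf (assocFun P a) (P.part a) := by
      rw [h, hEq]; exact hb4
    exact absurd (h4.2 a haA) (not_le.2 ha1)
  · have h4 : IsMinOf (assocFun P b) (P.part b) := by
      rw [← h, ← hEq]; exact ha4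
    exact absurd (h4.2 b (hEq ▸ hbB)) (not_le.2 hb1)
  · exact hab (le_antisymm (hb3.2 a (hEq ▸ haA)) (ha3.2 b hbB))

noncomputable def assocPerm (P : FP k) : Equiv.Perm (Fin k) :=
  Equiv.ofBijective _ ((Finite.injective_iff_bijective).1 (assocFun_inj P))

lemma assocPerm_apply (P : FP k) (b : Fin k) : assocPerm P b = assocFun P b := rfl

lemma isAssocPerm_assocPerm (P : FP k) : IsAssocPerm P (assocPerm P) := by
  intro B hB b hb
  have hBpart : B = P.part b :=
    parts_eq hB (P.part_mem.2 (Finset.mem_univ b)) hb (P.mem_part (Finset.mem_univ b))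
  subst hBpart
  refine ⟨assocFun_mem P b, ?_⟩
  rcases assocFun_spec P b with ⟨h1, h2⟩ | h3
  · exact Or.inl ⟨h1, h2⟩
  · exact Or.inr h3

end Assoc

section Main
variable {n : ℕ} {π ρ : FP n} {θ : FP (2*n)}

lemma exists_rep_min {Q : Finset (Fin n)} {f : Fin n → Fin (2*n)}
    (h : (Q.image f).Nonempty) : ∃ q ∈ Q, (Q.image f).min' h = f q := by
  obtain ⟨q, hq, he⟩ := Finset.mem_image.1 ((Q.image f).min'_mem h)
  exact ⟨q, hq, he.symm⟩

lemma exists_rep_max {Q : Finset (Fin n)} {f : Fin n → Fin (2*n)}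
    (h : (Q.image f).Nonempty) : ∃ q ∈ Q, (Q.image f).max' h = f q := by
  obtain ⟨q, hq, he⟩ := Finset.mem_image.1 ((Q.image f).max'_mem h)
  exact ⟨q, hq, he.symm⟩

/-- from opposite parity, if `X` has an odd-valued element then `P` consists of
even-valued elements -/
lemma oddBlock_of_opp {X P : Finset (Fin (2*n))} (h : OppositeParity X P)
    {x : Fin (2*n)} (hx : x ∈ X) (hxv : x.val % 2 = 1) : OddBlock P := by
  rcases h with ⟨h1, _⟩ | ⟨_, h2⟩
  · have := h1 x hx; omega
  · exact h2

lemma evenBlock_of_opp {X P : Finset (Fin (2*n))} (h : OppositeParity X P)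
    {x : Fin (2*n)} (hx : x ∈ X) (hxv : x.val % 2 = 0) : EvenBlock P := by
  rcases h with ⟨_, h2⟩ | ⟨h1, _⟩
  · exact h2
  · have := h1 x hx; omega

variable (hθ : IsOddEvenJoin π ρ θ)
include hθ

/-- an odd block of `θ` is the image of a block of `π` -/
lemma oddBlock_rep {X : Finset (Fin (2*n))} (hX : X ∈ θ.parts) (hodd : OddBlock X) :
    ∃ Q ∈ π.parts, X = Q.image oddEmb := by
  rcases parts_cases hθ hX with h | ⟨A, hA, rfl⟩
  · exact h
  · exfalso
    obtain ⟨a, ha⟩ := ρ.nonempty_of_mem_parts hA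
    have h1 := hodd (evenEmb a) (Finset.mem_image_of_mem _ ha)
    have : (evenEmb a).val = 2*a.val + 1 := rfl
    omega

lemma evenBlock_rep {X : Finset (Fin (2*n))} (hX : X ∈ θ.parts) (heven : EvenBlock X) :
    ∃ D ∈ ρ.parts, X = D.image evenEmb := by
  rcases parts_cases hθ hX with ⟨A, hA, rfl⟩ | h
  · exfalso
    obtain ⟨a, ha⟩ := π.nonempty_of_mem_parts hA
    have h1 := heven (oddEmb a) (Finset.mem_image_of_mem _ ha)
    have : (oddEmb a).val = 2*a.val := rfl
    omega
  · exact h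

variable (hπ : IsNC π) (hρ : IsNC ρ) (hθNC : IsNC θ)
  (hpar : ∀ A ∈ θ.parts, ¬ IsOuter θ A → ∀ P, IsParent θ A P → OppositeParity A P)
include hπ hρ hθNC hpar

/-- Case I of the crux: `b < c` adjacent in a block of `ρ`. -/
lemma caseI {b c : Fin n} (hcB : c ∈ ρ.part b) (hbc : b < c)
    (hcons : ∀ x ∈ ρ.part b, b < x → c ≤ x) :
    (assocFun π c).val = b.val + 1 := by
  have hbval : b.val + 1 ≤ c.val := Fin.lt_def.1 hbc
  have hcn := c.isLt
  set a1 : Fin n := ⟨b.val + 1, by omega⟩ with ha1def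
  have ha1val : a1.val = b.val + 1 := rfl
  set B := ρ.part b with hBdef
  have hBmem : B ∈ ρ.parts := ρ.part_mem.2 (Finset.mem_univ _)
  have hbB : b ∈ B := ρ.mem_part (Finset.mem_univ _)
  set P := π.part a1 with hPdef
  have hPmem : P ∈ π.parts := π.part_mem.2 (Finset.mem_univ _)
  have ha1P : a1 ∈ P := π.mem_part (Finset.mem_univ _)
  have step1 : ∀ x ∈ P, a1 ≤ x := by
    intro x hx
    by_contra hcon
    have h1 := Fin.lt_def.1 (lt_of_not_ge hcon)
    have hxb : x ≤ b := Fin.le_def.2 (by omega)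
    exact noMix1 hθ hθNC hPmem hBmem hx ha1P hbB hcB hxb
      (Fin.lt_def.2 (by omega)) (Fin.le_def.2 (by omega))
  have step2 : ∀ x ∈ P, x ≤ c := by
    intro x hx
    by_contra hcon
    exact noMix2 hθ hθNC hPmem hBmem ha1P hx hbB hcB
      (Fin.lt_def.2 (by omega)) (Fin.le_def.2 (by omega)) (lt_of_not_ge hcon)
  have step3 : c ∈ P := by
    by_contra hcP
    have hPne : P.Nonempty := ⟨a1, ha1P⟩
    set m := P.max' hPne with hmdef
    have hmP : m ∈ P := P.max'_mem hPne
    have hma1 : a1 ≤ m := P.le_max' _ ha1P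
    have hmc : m < c := lt_of_le_of_ne (step2 m hmP) (fun h => hcP (h ▸ hmP))
    have hbm : b < m := Fin.lt_def.2 (by have := Fin.le_def.1 hma1; omega)
    set B' := ρ.part m with hB'def
    have hB'mem : B' ∈ ρ.parts := ρ.part_mem.2 (Finset.mem_univ _)
    have hmB' : m ∈ B' := ρ.mem_part (Finset.mem_univ _)
    have hmnB : m ∉ B := fun h => absurd (hcons m h hbm) (not_le.2 hmc)
    have hB'sub : ∀ x ∈ B', b < x ∧ x < c := by
      intro x hx
      constructor
      · by_contra hcon
        rcases eq_or_lt_of_le (le_of_not_gt hcon) with heq | hlt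
        · exact hmnB ((parts_eq hB'mem hBmem (heq ▸ hx) hbB) ▸ hmB')
        · exact hmnB ((crossNC hρ hB'mem hBmem hx hmB' hbB hcB hlt hbm hmc) ▸ hmB')
      · by_contra hcon
        rcases eq_or_lt_of_le (le_of_not_gt hcon) with heq | hlt
        · exact hmnB ((parts_eq hB'mem hBmem (heq ▸ hx) hcB) ▸ hmB')
        · exact hmnB ((crossNC hρ hBmem hB'mem hbB hcB hmB' hx hbm hmc hlt).symm ▸ hmB')
    set E := B.image evenEmb with hEdef
    set E' := B'.image evenEmb with hE'def
    have hEmem : E ∈ θ.parts := evenPart_mem hθ hBmem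
    have hE'mem : E' ∈ θ.parts := evenPart_mem hθ hB'mem
    have hEne : E.Nonempty := ⟨_, Finset.mem_image_of_mem _ hbB⟩
    have hE'ne : E'.Nonempty := ⟨_, Finset.mem_image_of_mem _ hmB'⟩
    have hstrict : StrictlyEmbraces E E' := by
      rw [strictlyEmbraces_iff hE'ne hEne]
      obtain ⟨x₀, hx₀, hx₀e⟩ := exists_rep_min (Q := B') (f := evenEmb) hE'ne
      obtain ⟨x₁, hx₁, hx₁e⟩ := exists_rep_max (Q := B') (f := evenEmb) hE'ne
      constructor
      · refine lt_of_le_of_lt (E.min'_le _ (Finset.mem_image_of_mem _ hbB)) ?_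
        rw [hx₀e]
        exact Fin.lt_def.2 (by have := Fin.lt_def.1 (hB'sub x₀ hx₀).1; simp [evenEmb]; omega)
      · refine lt_of_lt_of_le ?_ (E.le_max' _ (Finset.mem_image_of_mem _ hcB))
        rw [hx₁e]
        exact Fin.lt_def.2 (by have := Fin.lt_def.1 (hB'sub x₁ hx₁).2; simp [evenEmb]; omega)
    have hstrE' : ∃ Y ∈ θ.parts, StrictlyEmbraces Y E' := ⟨E, hEmem, hstrict⟩
    obtain ⟨U, hUIP⟩ := parent_exists hθNC hE'mem hstrE'
    have hUmem : U ∈ θ.parts := hUIP.1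
    have hUne := θ.nonempty_of_mem_parts hUmem
    have hopp : OppositeParity E' U :=
      hpar E' hE'mem (fun h => h.2 hstrE') U hUIP
    have hUodd : OddBlock U :=
      oddBlock_of_opp hopp (Finset.mem_image_of_mem _ hmB') (by simp [evenEmb])
    obtain ⟨Q, hQmem, hUeq⟩ := oddBlock_rep hθ hUmem hUodd
    have hQne : (Q.image oddEmb).Nonempty := hUeq ▸ hUne
    have hembU : Embraces U E' := hUIP.2.2.1
    have hEE' : E ≠ E' := by
      intro h
      have h2 : evenEmb m ∈ B.image evenEmb := by
        rw [← hEdef, h, hE'def]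
        exact Finset.mem_image_of_mem _ hmB'
      obtain ⟨mm, hmm, hmme⟩ := Finset.mem_image.1 h2
      exact hmnB (evenEmb_injective hmme ▸ hmm)
    have hembEU : Embraces E U := hUIP.2.2.2 E hEmem hEE'
      ((embraces_iff hEne hE'ne).2
        ⟨le_of_lt ((strictlyEmbraces_iff hE'ne hEne).1 hstrict).1,
         le_of_lt ((strictlyEmbraces_iff hE'ne hEne).1 hstrict).2⟩)
    -- extract q₁, q₂
    obtain ⟨q₁, hq₁Q, hq₁e⟩ := exists_rep_min (Q := Q) (f := oddEmb) hQne
    obtain ⟨q₂, hq₂Q, hq₂e⟩ := exists_rep_max (Q := Q) (f := oddEmb) hQne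
    have hminUle : (Q.image oddEmb).min' hQne ≤ E'.min' hE'ne := by
      have := ((embraces_iff hUne hE'ne).1 hembU).1
      simp only [hUeq] at this ⊢
      exact this
    have hmaxUge : E'.max' hE'ne ≤ (Q.image oddEmb).max' hQne := by
      have := ((embraces_iff hUne hE'ne).1 hembU).2
      simp only [hUeq] at this ⊢
      exact this
    have hq₁m : q₁.val ≤ m.val := by
      have h1 : (Q.image oddEmb).min' hQne ≤ evenEmb m :=
        le_trans hminUle (E'.min'_le _ (Finset.mem_image_of_mem _ hmB'))
      rw [hq₁e] at h1
      have := Fin.le_def.1 h1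
      simp [oddEmb, evenEmb] at this
      omega
    have hq₂m : m.val < q₂.val := by
      have h1 : evenEmb m ≤ (Q.image oddEmb).max' hQne :=
        le_trans (E'.le_max' _ (Finset.mem_image_of_mem _ hmB')) hmaxUge
      rw [hq₂e] at h1
      have := Fin.le_def.1 h1
      simp [oddEmb, evenEmb] at this
      omega
    -- case split on q₁ vs b
    rcases le_or_gt q₁.val b.val with hq₁b | hbq₁
    · -- crossing U with E
      obtain ⟨t, htB, hte⟩ := exists_rep_max (Q := B) (f := evenEmb) hEne
      have hmaxUE : (Q.image oddEmb).max' hQne ≤ E.max' hEne := by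
        have := ((embraces_iff hEne hUne).1 hembEU).2
        simp only [hUeq] at this
        exact this
      have hkl : oddEmb q₂ < E.max' hEne := by
        rw [← hq₂e]
        refine lt_of_le_of_ne hmaxUE ?_
        rw [hq₂e, hte]
        intro h
        have := congrArg Fin.val h
        simp [oddEmb, evenEmb] at this
        omega
      have hcr := crossNC hθNC (hUeq ▸ hUmem) hEmem
        (Finset.mem_image_of_mem oddEmb hq₁Q) (Finset.mem_image_of_mem oddEmb hq₂Q)
        (Finset.mem_image_of_mem evenEmb hbB) (E.max'_mem hEne)
        (Fin.lt_def.2 (by simp [oddEmb, evenEmb]; omega))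
        (Fin.lt_def.2 (by
          simp [oddEmb, evenEmb]
          have := Fin.le_def.1 hma1
          omega))
        hkl
      exact odd_ne_even (oddBlock_image Q) (evenBlock_image B) hQne hcr
    · -- q₁ ∈ (b, m]
      by_cases hq₁P : q₁ ∈ P
      · have hQP : Q = P := parts_eq hQmem hPmem hq₁Q hq₁P
        have : q₂ ∈ P := hQP ▸ hq₂Q
        exact absurd (P.le_max' _ this) (not_le.2 (Fin.lt_def.2 hq₂m))
      · have ha1q₁ : a1 < q₁ := by
          refine lt_of_le_of_ne (Fin.le_def.2 (by omega)) ?_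
          intro h
          exact hq₁P (h ▸ ha1P)
        have hq₁mlt : q₁ < m := by
          refine lt_of_le_of_ne (Fin.le_def.2 hq₁m) ?_
          intro h
          exact hq₁P (h ▸ hmP)
        have hcr := crossNC hπ hPmem hQmem ha1P hmP hq₁Q hq₂Q ha1q₁ hq₁mlt
          (Fin.lt_def.2 hq₂m)
        exact hq₁P (hcr.symm ▸ hq₁Q)
  -- conclude
  have hpartc : π.part c = P :=
    parts_eq (π.part_mem.2 (Finset.mem_univ _)) hPmem (π.mem_part (Finset.mem_univ _)) step3
  have := assocFun_eq_of_wrap (P := π) (b := c) (s := a1)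
    (hpartc ▸ ha1P) (fun x hx => step2 x (hpartc ▸ hx)) (fun x hx => step1 x (hpartc ▸ hx))
  rw [this]

end Main

section Main2
variable {n : ℕ} {π ρ : FP n} {θ : FP (2*n)}
variable (hθ : IsOddEvenJoin π ρ θ) (hπ : IsNC π) (hρ : IsNC ρ) (hθNC : IsNC θ)
  (h2 : ExactlyTwoOuterBlocks θ)
  (hpar : ∀ A ∈ θ.parts, ¬ IsOuter θ A → ∀ P, IsParent θ A P → OppositeParity A P)
include hθ hπ hρ hθNC h2 hpar

/-- Case II.1 of the crux: `b` is the max and `c` the min of a block of `ρ`, no wrap. -/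
lemma caseII1 (hn : 0 < n) {b c : Fin n}
    (hcB : c ∈ ρ.part b) (hmin : ∀ x ∈ ρ.part b, c ≤ x) (hmax : ∀ x ∈ ρ.part b, x ≤ b)
    (hb : b.val + 1 < n) : (assocFun π c).val = b.val + 1 := by
  set B := ρ.part b with hBdef
  have hBmem : B ∈ ρ.parts := ρ.part_mem.2 (Finset.mem_univ _)
  have hbB : b ∈ B := ρ.mem_part (Finset.mem_univ _)
  have hcb : c.val ≤ b.val := Fin.le_def.1 (hmax c hcB)
  set a1 : Fin n := ⟨b.val + 1, hb⟩ with ha1def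
  have ha1val : a1.val = b.val + 1 := rfl
  set E := B.image evenEmb with hEdef
  have hEmem : E ∈ θ.parts := evenPart_mem hθ hBmem
  have hEne : E.Nonempty := ⟨_, Finset.mem_image_of_mem _ hbB⟩
  have hminE : E.min' hEne = evenEmb c := by
    refine le_antisymm (E.min'_le _ (Finset.mem_image_of_mem _ hcB)) ?_
    obtain ⟨x₀, hx₀, he⟩ := exists_rep_min (Q := B) (f := evenEmb) hEne
    rw [he]
    exact Fin.le_def.2 (by have := Fin.le_def.1 (hmin x₀ hx₀); simp [evenEmb]; omega)
  have hmaxE : E.max' hEne = evenEmb b := by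
    refine le_antisymm ?_ (E.le_max' _ (Finset.mem_image_of_mem _ hbB))
    obtain ⟨x₀, hx₀, he⟩ := exists_rep_max (Q := B) (f := evenEmb) hEne
    rw [he]
    exact Fin.le_def.2 (by have := Fin.le_def.1 (hmax x₀ hx₀); simp [evenEmb]; omega)
  -- E is not outer
  have hstrE : ∃ Y ∈ θ.parts, StrictlyEmbraces Y E := by
    refine exists_strict hθ hn h2 hEmem ?_ ?_
    · intro hmem
      obtain ⟨x, _, hxe⟩ := Finset.mem_image.1 hmem
      have := congrArg Fin.val hxe
      simp [evenEmb] at this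
    · intro hmem
      obtain ⟨x, hxB, hxe⟩ := Finset.mem_image.1 hmem
      have h1 := congrArg Fin.val hxe
      have h2 := Fin.le_def.1 (hmax x hxB)
      simp [evenEmb] at h1
      omega
  obtain ⟨F, hFIP⟩ := parent_exists hθNC hEmem hstrE
  have hFmem : F ∈ θ.parts := hFIP.1
  have hFne := θ.nonempty_of_mem_parts hFmem
  have hoppEF : OppositeParity E F := hpar E hEmem (fun h => h.2 hstrE) F hFIP
  have hFodd : OddBlock F :=
    oddBlock_of_opp hoppEF (Finset.mem_image_of_mem _ hbB) (by simp [evenEmb])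
  obtain ⟨P', hP'mem, hFeq⟩ := oddBlock_rep hθ hFmem hFodd
  have hP'ne : (P'.image oddEmb).Nonempty := hFeq ▸ hFne
  have hembFE : Embraces F E := hFIP.2.2.1
  obtain ⟨f₀, hf₀P', hf₀e⟩ := exists_rep_min (Q := P') (f := oddEmb) hP'ne
  obtain ⟨f₁, hf₁P', hf₁e⟩ := exists_rep_max (Q := P') (f := oddEmb) hP'ne
  have hminF : F.min' hFne = oddEmb f₀ := by
    have : F.min' hFne = (P'.image oddEmb).min' hP'ne := by congr 1 <;> rw [hFeq]
    rw [this, hf₀e]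
  have hmaxF : F.max' hFne = oddEmb f₁ := by
    have : F.max' hFne = (P'.image oddEmb).max' hP'ne := by congr 1 <;> rw [hFeq]
    rw [this, hf₁e]
  have hf₀c : f₀.val ≤ c.val := by
    have h1 : F.min' hFne ≤ E.min' hEne := ((embraces_iff hFne hEne).1 hembFE).1
    rw [hminF, hminE] at h1
    have := Fin.le_def.1 h1
    simp [oddEmb, evenEmb] at this
    omega
  have hf₁b : b.val < f₁.val := by
    have h1 : E.max' hEne ≤ F.max' hFne := ((embraces_iff hFne hEne).1 hembFE).2
    rw [hmaxF, hmaxE] at h1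
    have := Fin.le_def.1 h1
    simp [oddEmb, evenEmb] at this
    omega
  -- main contradiction hypothesis
  have hGgoal : a1 ∈ π.part c := by
    by_contra hG
    -- Step B : a1 ∈ P'
    have hStepB : a1 ∈ P' := by
      set S₂ := P'.filter (fun x => b < x) with hS₂def
      have hS₂ne : S₂.Nonempty := ⟨f₁, Finset.mem_filter.2 ⟨hf₁P', Fin.lt_def.2 hf₁b⟩⟩
      set a₂ := S₂.min' hS₂ne with ha₂def
      have ha₂S₂ := S₂.min'_mem hS₂ne
      have ha₂P' : a₂ ∈ P' := (Finset.mem_filter.1 ha₂S₂).1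
      have hba₂ : b < a₂ := (Finset.mem_filter.1 ha₂S₂).2
      have ha₂min : ∀ x ∈ P', b < x → a₂ ≤ x := fun x hx hbx =>
        S₂.min'_le x (Finset.mem_filter.2 ⟨hx, hbx⟩)
      by_contra hnota1
      have ha₂a1 : a1.val < a₂.val := by
        have h1 := Fin.lt_def.1 hba₂
        rcases Nat.lt_or_ge a1.val a₂.val with h | h
        · exact h
        · exfalso
          have : a₂ = a1 := Fin.ext (by omega)
          exact hnota1 (this ▸ ha₂P')
      have hna1P' : a1 ∉ P' := fun h =>
        absurd (Fin.le_def.1 (ha₂min a1 h (Fin.lt_def.2 (by omega)))) (by omega)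
      set P₁ := π.part a1 with hP₁def
      have hP₁mem : P₁ ∈ π.parts := π.part_mem.2 (Finset.mem_univ _)
      have ha1P₁ : a1 ∈ P₁ := π.mem_part (Finset.mem_univ _)
      have hP₁P' : P₁ ≠ P' := fun h => hna1P' (h ▸ ha1P₁)
      have hcP₁ : c ∉ P₁ := by
        intro h
        exact hG ((parts_eq (π.part_mem.2 (Finset.mem_univ c)) hP₁mem
          (π.mem_part (Finset.mem_univ c)) h) ▸ ha1P₁)
      set G₂ := P₁.image oddEmb with hG₂def
      have hG₂mem : G₂ ∈ θ.parts := oddPart_mem hθ hP₁mem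
      have hG₂ne : G₂.Nonempty := ⟨_, Finset.mem_image_of_mem _ ha1P₁⟩
      have hB1 : ∀ x ∈ P₁, a1 ≤ x := by
        intro x hx
        by_contra hcon
        have hxb : x.val ≤ b.val := by have := Fin.lt_def.1 (lt_of_not_ge hcon); omega
        rcases lt_trichotomy x.val c.val with hxc | hxc | hxc
        · -- x < c : G₂ embraces E, so G₂ embraces F; then π-crossing
          have hembG₂E : Embraces G₂ E := by
            rw [embraces_iff hG₂ne hEne, hminE, hmaxE]
            constructor
            · exact le_trans (G₂.min'_le _ (Finset.mem_image_of_mem _ hx))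
                (Fin.le_def.2 (by simp [oddEmb, evenEmb]; omega))
            · exact le_trans (Fin.le_def.2 (by simp [oddEmb, evenEmb]; omega))
                (G₂.le_max' _ (Finset.mem_image_of_mem _ ha1P₁))
          have hG₂E : G₂ ≠ E := odd_ne_even (oddBlock_image P₁) (evenBlock_image B) hG₂ne
          have hembG₂F : Embraces G₂ F := hFIP.2.2.2 G₂ hG₂mem hG₂E hembG₂E
          obtain ⟨p₀, hp₀P₁, hp₀e⟩ := exists_rep_min (Q := P₁) (f := oddEmb) hG₂ne
          have hp₀f₀ : p₀.val ≤ f₀.val := by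
            have h1 := ((embraces_iff hG₂ne hFne).1 hembG₂F).1
            rw [hminF] at h1
            rw [hp₀e] at h1
            have := Fin.le_def.1 h1
            simp [oddEmb] at this
            omega
          have hp₀lt : p₀ < f₀ := by
            refine lt_of_le_of_ne (Fin.le_def.2 hp₀f₀) (fun h => hP₁P' ?_)
            exact parts_eq hP₁mem hP'mem hp₀P₁ (h ▸ hf₀P')
          exact hP₁P' (crossNC hπ hP₁mem hP'mem hp₀P₁ ha1P₁ hf₀P' ha₂P' hp₀lt
            (Fin.lt_def.2 (by omega)) (Fin.lt_def.2 (by omega)))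
        · exact hcP₁ (Fin.ext hxc ▸ hx)
        · -- c < x ≤ b : mixed crossing
          exact noMix2 hθ hθNC hP₁mem hBmem hx ha1P₁ hcB hbB
            (Fin.lt_def.2 hxc) (Fin.le_def.2 hxb) (Fin.lt_def.2 (by omega))
      have hB2 : ∀ x ∈ P₁, x.val < a₂.val := by
        intro x hx
        by_contra hcon
        have hxa₂ : a₂.val ≤ x.val := le_of_not_gt hcon
        rcases eq_or_lt_of_le hxa₂ with heq | hlt
        · exact hP₁P' (parts_eq hP₁mem hP'mem ((Fin.ext heq).symm ▸ hx) ha₂P')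
        · exact hP₁P' (crossNC hπ hP'mem hP₁mem hf₀P' ha₂P' ha1P₁ hx
            (Fin.lt_def.2 (by omega)) (Fin.lt_def.2 (by omega)) (Fin.lt_def.2 hlt)).symm
      have hminG₂ : G₂.min' hG₂ne = oddEmb a1 := by
        refine le_antisymm (G₂.min'_le _ (Finset.mem_image_of_mem _ ha1P₁)) ?_
        obtain ⟨p₀, hp₀P₁, hp₀e⟩ := exists_rep_min (Q := P₁) (f := oddEmb) hG₂ne
        rw [hp₀e]
        exact Fin.le_def.2 (by
          have := Fin.le_def.1 (hB1 p₀ hp₀P₁); simp [oddEmb]; omega)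
      have hmaxG₂lt : (G₂.max' hG₂ne).val < 2*a₂.val := by
        obtain ⟨p₃, hp₃P₁, hp₃e⟩ := exists_rep_max (Q := P₁) (f := oddEmb) hG₂ne
        rw [hp₃e]
        have := hB2 p₃ hp₃P₁
        simp [oddEmb]
        omega
      have hFG₂ : F ≠ G₂ := by
        intro h
        have : oddEmb a1 ∈ P'.image oddEmb := by
          rw [← hFeq, h]
          exact Finset.mem_image_of_mem _ ha1P₁
        obtain ⟨q, hq, hqe⟩ := Finset.mem_image.1 this
        exact hna1P' (oddEmb_injective hqe ▸ hq)
      have hstrFG₂ : StrictlyEmbraces F G₂ := by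
        rw [strictlyEmbraces_iff hG₂ne hFne, hminF, hminG₂]
        constructor
        · exact Fin.lt_def.2 (by simp [oddEmb]; omega)
        · have h1 : oddEmb a₂ ≤ F.max' hFne := by
            rw [hmaxF]
            refine Fin.le_def.2 ?_
            have : oddEmb a₂ ∈ P'.image oddEmb := Finset.mem_image_of_mem _ ha₂P'
            have h2 := Fin.le_def.1 ((P'.image oddEmb).le_max' _ this)
            rw [hf₁e] at h2
            exact h2
          refine lt_of_lt_of_le (Fin.lt_def.2 ?_) h1
          simp [oddEmb]
          omega
      have hIPG₂F : IsParent θ G₂ F := by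
        refine ⟨hFmem, hFG₂, (embraces_iff hFne hG₂ne).2
          ⟨le_of_lt ((strictlyEmbraces_iff hG₂ne hFne).1 hstrFG₂).1,
           le_of_lt ((strictlyEmbraces_iff hG₂ne hFne).1 hstrFG₂).2⟩, ?_⟩
        intro A' hA' hA'G₂ hembA'
        by_cases hA'F : A' = F
        · rw [hA'F]; exact embraces_refl hFne
        have hA'ne := θ.nonempty_of_mem_parts hA'
        have hminA'le : A'.min' hA'ne ≤ G₂.min' hG₂ne := ((embraces_iff hA'ne hG₂ne).1 hembA').1
        have hmaxA'ge : G₂.max' hG₂ne ≤ A'.max' hA'ne := ((embraces_iff hA'ne hG₂ne).1 hembA').2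
        have hminA'lt : (A'.min' hA'ne).val < 2*b.val + 2 := by
          have hne2 : A'.min' hA'ne ≠ G₂.min' hG₂ne := fun h =>
            hA'G₂ (min'_injective hA' hG₂mem hA'ne hG₂ne h)
          have := Fin.le_def.1 hminA'le
          have h3 := congrArg Fin.val hminG₂
          simp [oddEmb] at h3
          rcases eq_or_lt_of_le this with heq | hlt
          · exact absurd (Fin.ext heq) hne2
          · omega
        have hmaxA'big : 2*b.val + 2 ≤ (A'.max' hA'ne).val := by
          have h1 := Fin.le_def.1 hmaxA'ge
          have h2 : oddEmb a1 ≤ G₂.max' hG₂ne :=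
            G₂.le_max' _ (Finset.mem_image_of_mem _ ha1P₁)
          have h3 := Fin.le_def.1 h2
          simp [oddEmb] at h3
          omega
        have hA'E : A' ≠ E := by
          intro h
          subst h
          have := Fin.le_def.1 hmaxA'ge
          have h2 := congrArg Fin.val hmaxE
          have h3 : oddEmb a1 ≤ G₂.max' hG₂ne :=
            G₂.le_max' _ (Finset.mem_image_of_mem _ ha1P₁)
          have h4 := Fin.le_def.1 h3
          simp [oddEmb, evenEmb] at h2 h4
          omega
        -- min' A' ≤ 2c
        have hminA'c : (A'.min' hA'ne).val ≤ 2*c.val := by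
          by_contra hcon2
          have hge : 2*c.val + 1 ≤ (A'.min' hA'ne).val := by omega
          rcases eq_or_lt_of_le hge with heq | hlt
          · refine hA'E (parts_eq hA' hEmem ?_ (Finset.mem_image_of_mem _ hcB))
            have : A'.min' hA'ne = evenEmb c := Fin.ext (by simp [evenEmb]; omega)
            exact this ▸ A'.min'_mem hA'ne
          · rcases Nat.lt_or_ge (A'.min' hA'ne).val (2*b.val+1) with hlt2 | hge2
            · exact hA'E (crossNC hθNC hEmem hA'
                (Finset.mem_image_of_mem evenEmb hcB) (Finset.mem_image_of_mem evenEmb hbB)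
                (A'.min'_mem hA'ne) (A'.max'_mem hA'ne)
                (Fin.lt_def.2 (by simp [evenEmb]; omega))
                (Fin.lt_def.2 (by simp [evenEmb]; omega))
                (Fin.lt_def.2 (by simp [evenEmb]; omega))).symm
            · have : (A'.min' hA'ne).val = 2*b.val+1 := by omega
              refine hA'E (parts_eq hA' hEmem ?_ (Finset.mem_image_of_mem _ hbB))
              have h5 : A'.min' hA'ne = evenEmb b := Fin.ext (by simp [evenEmb]; omega)
              exact h5 ▸ A'.min'_mem hA'ne
        have hembA'E : Embraces A' E := by
          rw [embraces_iff hA'ne hEne, hminE, hmaxE]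
          exact ⟨Fin.le_def.2 (by simp [evenEmb]; omega),
            Fin.le_def.2 (by simp [evenEmb]; omega)⟩
        exact hFIP.2.2.2 A' hA' hA'E hembA'E
      -- parity contradiction
      have hopp2 : OppositeParity G₂ F :=
        hpar G₂ hG₂mem (fun h => h.2 ⟨F, hFmem, hstrFG₂⟩) F hIPG₂F
      rcases hopp2 with ⟨_, h⟩ | ⟨h, _⟩
      · have := h (oddEmb f₀) (hFeq ▸ Finset.mem_image_of_mem _ hf₀P')
        have h9 : (2*f₀.val) % 2 = 1 := this
        omega
      · have := h (oddEmb a1) (Finset.mem_image_of_mem _ ha1P₁)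
        have h9 : (2*a1.val) % 2 = 1 := this
        omega
    -- Step A : c ∈ P'
    have hStepA : c ∈ P' := by
      by_contra hcP'
      set T := P'.filter (fun x => x ≤ c) with hTdef
      have hTne : T.Nonempty := ⟨f₀, Finset.mem_filter.2 ⟨hf₀P', Fin.le_def.2 hf₀c⟩⟩
      set aL := T.max' hTne with haLdef
      have haLT := T.max'_mem hTne
      have haLP' : aL ∈ P' := (Finset.mem_filter.1 haLT).1
      have haLc : aL ≤ c := (Finset.mem_filter.1 haLT).2
      have haLlt : aL.val < c.val := by
        rcases eq_or_lt_of_le (Fin.le_def.1 haLc) with heq | hlt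
        · exact absurd (Fin.ext heq ▸ haLP') hcP'
        · exact hlt
      have haLmax : ∀ x ∈ P', x ≤ c → x ≤ aL := fun x hx hxc =>
        T.le_max' x (Finset.mem_filter.2 ⟨hx, hxc⟩)
      set Pc := π.part c with hPcdef
      have hPcmem : Pc ∈ π.parts := π.part_mem.2 (Finset.mem_univ _)
      have hcPc : c ∈ Pc := π.mem_part (Finset.mem_univ _)
      have hPcP' : Pc ≠ P' := fun h => hcP' (h ▸ hcPc)
      set Gc := Pc.image oddEmb with hGcdef
      have hGcmem : Gc ∈ θ.parts := oddPart_mem hθ hPcmem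
      have hGcne : Gc.Nonempty := ⟨_, Finset.mem_image_of_mem _ hcPc⟩
      have hGcE : Gc ≠ E := odd_ne_even (oddBlock_image Pc) (evenBlock_image B) hGcne
      have hA1 : ∀ x ∈ Pc, x.val ≤ c.val := by
        intro x hx
        by_contra hcon
        have hcx : c.val < x.val := lt_of_not_ge hcon
        rcases le_or_gt x.val b.val with hxb | hbx
        · exact noMix1 hθ hθNC hPcmem hBmem hcPc hx hcB hbB (le_refl c)
            (Fin.lt_def.2 hcx) (Fin.le_def.2 hxb)
        · -- x > b : Gc embraces E hence F ; π-crossing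
          have hembGcE : Embraces Gc E := by
            rw [embraces_iff hGcne hEne, hminE, hmaxE]
            constructor
            · exact le_trans (Gc.min'_le _ (Finset.mem_image_of_mem _ hcPc))
                (Fin.le_def.2 (by simp [oddEmb, evenEmb]))
            · exact le_trans (Fin.le_def.2 (by simp [oddEmb, evenEmb]; omega))
                (Gc.le_max' _ (Finset.mem_image_of_mem _ hx))
          have hembGcF : Embraces Gc F := hFIP.2.2.2 Gc hGcmem hGcE hembGcE
          obtain ⟨g₀, hg₀Pc, hg₀e⟩ := exists_rep_min (Q := Pc) (f := oddEmb) hGcne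
          have hg₀f₀ : g₀.val ≤ f₀.val := by
            have h1 := ((embraces_iff hGcne hFne).1 hembGcF).1
            rw [hminF, hg₀e] at h1
            have := Fin.le_def.1 h1
            simp [oddEmb] at this
            omega
          have hf₀lt : f₀.val < c.val := by
            rcases eq_or_lt_of_le hf₀c with heq | hlt
            · exact absurd (Fin.ext heq ▸ hf₀P') hcP'
            · exact hlt
          have hg₀lt : g₀ < f₀ := by
            refine lt_of_le_of_ne (Fin.le_def.2 hg₀f₀) (fun h => hPcP' ?_)
            exact parts_eq hPcmem hP'mem hg₀Pc (h ▸ hf₀P')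
          exact hPcP' (crossNC hπ hPcmem hP'mem hg₀Pc hcPc hf₀P' hStepB hg₀lt
            (Fin.lt_def.2 hf₀lt) (Fin.lt_def.2 (by omega)))
      have hA2 : ∀ x ∈ Pc, aL.val < x.val := by
        intro x hx
        by_contra hcon
        have hxaL : x.val ≤ aL.val := le_of_not_gt hcon
        rcases eq_or_lt_of_le hxaL with heq | hlt
        · exact hPcP' (parts_eq hPcmem hP'mem hx (Fin.ext heq ▸ haLP'))
        · exact hPcP' (crossNC hπ hPcmem hP'mem hx hcPc haLP' hStepB
            (Fin.lt_def.2 hlt) (Fin.lt_def.2 haLlt) (Fin.lt_def.2 (by omega)))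
      have hmaxGc : Gc.max' hGcne = oddEmb c := by
        refine le_antisymm ?_ (Gc.le_max' _ (Finset.mem_image_of_mem _ hcPc))
        obtain ⟨p₃, hp₃, hp₃e⟩ := exists_rep_max (Q := Pc) (f := oddEmb) hGcne
        rw [hp₃e]
        exact Fin.le_def.2 (by have := hA1 p₃ hp₃; simp [oddEmb]; omega)
      have hminGcgt : 2*aL.val + 1 < (Gc.min' hGcne).val := by
        obtain ⟨g₀, hg₀, hg₀e⟩ := exists_rep_min (Q := Pc) (f := oddEmb) hGcne
        rw [hg₀e]
        have := hA2 g₀ hg₀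
        simp [oddEmb]
        omega
      have hf₀aL : f₀.val ≤ aL.val := Fin.le_def.1 (haLmax f₀ hf₀P' (Fin.le_def.2 hf₀c))
      have hFGc : F ≠ Gc := by
        intro h
        have : oddEmb c ∈ P'.image oddEmb := by
          rw [← hFeq, h]
          exact Finset.mem_image_of_mem _ hcPc
        obtain ⟨q, hq, hqe⟩ := Finset.mem_image.1 this
        exact hcP' (oddEmb_injective hqe ▸ hq)
      have hstrFGc : StrictlyEmbraces F Gc := by
        rw [strictlyEmbraces_iff hGcne hFne, hminF, hmaxGc, hmaxF]
        constructor
        · exact Fin.lt_def.2 (by simp [oddEmb]; omega)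
        · exact Fin.lt_def.2 (by simp [oddEmb]; omega)
      have hIPGcF : IsParent θ Gc F := by
        refine ⟨hFmem, hFGc, (embraces_iff hFne hGcne).2
          ⟨le_of_lt ((strictlyEmbraces_iff hGcne hFne).1 hstrFGc).1,
           le_of_lt ((strictlyEmbraces_iff hGcne hFne).1 hstrFGc).2⟩, ?_⟩
        intro A' hA' hA'Gc hembA'
        by_cases hA'F : A' = F
        · rw [hA'F]; exact embraces_refl hFne
        have hA'ne := θ.nonempty_of_mem_parts hA'
        have hminA'le : A'.min' hA'ne ≤ Gc.min' hGcne := ((embraces_iff hA'ne hGcne).1 hembA').1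
        have hmaxA'ge : Gc.max' hGcne ≤ A'.max' hA'ne := ((embraces_iff hA'ne hGcne).1 hembA').2
        have hminA'c : (A'.min' hA'ne).val ≤ 2*c.val := by
          have h1 := Fin.le_def.1 hminA'le
          have h2 : (Gc.min' hGcne).val ≤ 2*c.val := by
            have := Fin.le_def.1 (Gc.min'_le _ (Finset.mem_image_of_mem oddEmb hcPc))
            simpa [oddEmb] using this
          omega
        have hmaxA'gt : 2*c.val < (A'.max' hA'ne).val := by
          have h1 := Fin.le_def.1 hmaxA'ge
          have h2 := congrArg Fin.val hmaxGc
          simp [oddEmb] at h2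
          have hne2 : Gc.max' hGcne ≠ A'.max' hA'ne := fun h =>
            hA'Gc (max'_injective hA' hGcmem hA'ne hGcne h.symm)
          rcases eq_or_lt_of_le h1 with heq | hlt
          · exact absurd (Fin.ext heq) hne2
          · omega
        have hA'E : A' ≠ E := by
          intro h
          subst h
          have h2 := congrArg Fin.val hminE
          have h3 := Fin.le_def.1 hminA'le
          have h4 : (Gc.min' hGcne).val ≤ 2*c.val := by
            have := Fin.le_def.1 (Gc.min'_le _ (Finset.mem_image_of_mem oddEmb hcPc))
            simpa [oddEmb] using this
          simp [evenEmb] at h2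
          omega
        have hmaxA'big : 2*b.val + 1 < (A'.max' hA'ne).val := by
          by_contra hcon2
          have hle : (A'.max' hA'ne).val ≤ 2*b.val + 1 := le_of_not_gt hcon2
          rcases eq_or_lt_of_le hle with heq | hlt
          · refine hA'E (parts_eq hA' hEmem ?_ (Finset.mem_image_of_mem _ hbB))
            have h5 : A'.max' hA'ne = evenEmb b := Fin.ext (by simp [evenEmb]; omega)
            exact h5 ▸ A'.max'_mem hA'ne
          · rcases Nat.lt_or_ge (2*c.val+1) (A'.max' hA'ne).val with hlt2 | hge2
            · exact hA'E (crossNC hθNC hA' hEmem (A'.min'_mem hA'ne) (A'.max'_mem hA'ne)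
                (Finset.mem_image_of_mem evenEmb hcB) (Finset.mem_image_of_mem evenEmb hbB)
                (Fin.lt_def.2 (by simp [evenEmb]; omega))
                (Fin.lt_def.2 (by simp [evenEmb]; omega))
                (Fin.lt_def.2 (by simp [evenEmb]; omega)))
            · have : (A'.max' hA'ne).val = 2*c.val+1 := by omega
              refine hA'E (parts_eq hA' hEmem ?_ (Finset.mem_image_of_mem _ hcB))
              have h5 : A'.max' hA'ne = evenEmb c := Fin.ext (by simp [evenEmb]; omega)
              exact h5 ▸ A'.max'_mem hA'ne
        have hembA'E : Embraces A' E := by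
          rw [embraces_iff hA'ne hEne, hminE, hmaxE]
          exact ⟨Fin.le_def.2 (by simp [evenEmb]; omega),
            Fin.le_def.2 (by simp [evenEmb]; omega)⟩
        exact hFIP.2.2.2 A' hA' hA'E hembA'E
      have hopp3 : OppositeParity Gc F :=
        hpar Gc hGcmem (fun h => h.2 ⟨F, hFmem, hstrFGc⟩) F hIPGcF
      rcases hopp3 with ⟨_, h⟩ | ⟨h, _⟩
      · have := h (oddEmb f₀) (hFeq ▸ Finset.mem_image_of_mem _ hf₀P')
        have h9 : (2*f₀.val) % 2 = 1 := this
        omega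
      · have := h (oddEmb c) (Finset.mem_image_of_mem _ hcPc)
        have h9 : (2*c.val) % 2 = 1 := this
        omega
    -- combine
    exact hG ((parts_eq (π.part_mem.2 (Finset.mem_univ c)) hP'mem
      (π.mem_part (Finset.mem_univ c)) hStepA) ▸ hStepB)
  -- now conclude the value of assocFun π c
  have hnext : ∀ x ∈ π.part c, c < x → a1 ≤ x := by
    intro x hx hcx
    by_contra hcon
    have hxb : x.val ≤ b.val := by
      have := Fin.lt_def.1 (lt_of_not_ge hcon); omega
    exact noMix1 hθ hθNC (π.part_mem.2 (Finset.mem_univ c)) hBmem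
      (π.mem_part (Finset.mem_univ c)) hx hcB hbB (le_refl c) hcx (Fin.le_def.2 hxb)
  have := assocFun_eq_of_next hGgoal (Fin.lt_def.2 (by omega)) hnext
  rw [this]

/-- Case II.2 of the crux: `b` is the max and `c` the min of a block of `ρ`, wrap-around. -/
lemma caseII2 (hn : 0 < n) {b c : Fin n}
    (hcB : c ∈ ρ.part b) (hmin : ∀ x ∈ ρ.part b, c ≤ x) (hmax : ∀ x ∈ ρ.part b, x ≤ b)
    (hb : b.val = n - 1) : (assocFun π c).val = 0 := by
  set B := ρ.part b with hBdef
  have hBmem : B ∈ ρ.parts := ρ.part_mem.2 (Finset.mem_univ _)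
  have hbB : b ∈ B := ρ.mem_part (Finset.mem_univ _)
  have hcb : c.val ≤ b.val := Fin.le_def.1 (hmax c hcB)
  set Pc := π.part c with hPcdef
  have hPcmem : Pc ∈ π.parts := π.part_mem.2 (Finset.mem_univ _)
  have hcPc : c ∈ Pc := π.mem_part (Finset.mem_univ _)
  have hA1 : ∀ x ∈ Pc, x ≤ c := by
    intro x hx
    by_contra hcon
    have hcx : c.val < x.val := Fin.lt_def.1 (lt_of_not_ge hcon)
    have hxb : x.val ≤ b.val := by have := x.isLt; omega
    exact noMix1 hθ hθNC hPcmem hBmem hcPc hx hcB hbB (le_refl c)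
      (Fin.lt_def.2 hcx) (Fin.le_def.2 hxb)
  have h0mem : (⟨0, hn⟩ : Fin n) ∈ Pc := by
    by_contra h0n
    set Gc := Pc.image oddEmb with hGcdef
    have hGcmem : Gc ∈ θ.parts := oddPart_mem hθ hPcmem
    have hGcne : Gc.Nonempty := ⟨_, Finset.mem_image_of_mem _ hcPc⟩
    have hstr : ∃ Y ∈ θ.parts, StrictlyEmbraces Y Gc := by
      refine exists_strict hθ hn h2 hGcmem ?_ ?_
      · intro hmem
        obtain ⟨x, hxPc, hxe⟩ := Finset.mem_image.1 hmem
        have h1 : 2 * x.val = 0 := congrArg Fin.val hxe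
        have hx0 : x.val = 0 := by omega
        exact h0n ((Fin.ext hx0 : x = (⟨0, hn⟩ : Fin n)) ▸ hxPc)
      · intro hmem
        obtain ⟨x, hxPc, hxe⟩ := Finset.mem_image.1 hmem
        have h1 : 2 * x.val = 2 * n - 1 := congrArg Fin.val hxe
        have h4 := x.isLt
        omega
    obtain ⟨V, hVIP⟩ := parent_exists hθNC hGcmem hstr
    have hVmem : V ∈ θ.parts := hVIP.1
    have hVne := θ.nonempty_of_mem_parts hVmem
    have hopp : OppositeParity Gc V := hpar Gc hGcmem (fun h => h.2 hstr) V hVIP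
    have hVeven : EvenBlock V :=
      evenBlock_of_opp hopp (Finset.mem_image_of_mem _ hcPc) (by simp [oddEmb])
    obtain ⟨D, hDmem, hVeq⟩ := evenBlock_rep hθ hVmem hVeven
    have hDne : (D.image evenEmb).Nonempty := hVeq ▸ hVne
    have hembV : Embraces V Gc := hVIP.2.2.1
    obtain ⟨d₁, hd₁D, hd₁e⟩ := exists_rep_min (Q := D) (f := evenEmb) hDne
    obtain ⟨d₂, hd₂D, hd₂e⟩ := exists_rep_max (Q := D) (f := evenEmb) hDne
    have hd₂c : c.val ≤ d₂.val := by
      have h1 : Gc.max' hGcne ≤ V.max' hVne := ((embraces_iff hVne hGcne).1 hembV).2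
      have h2 : oddEmb c ≤ Gc.max' hGcne := Gc.le_max' _ (Finset.mem_image_of_mem _ hcPc)
      have h3 : V.max' hVne = evenEmb d₂ := by
        have : V.max' hVne = (D.image evenEmb).max' hDne := by congr 1 <;> rw [hVeq]
        rw [this, hd₂e]
      have h4 := Fin.le_def.1 (le_trans h2 h1)
      rw [h3] at h4
      have h5 : (oddEmb c).val = 2*c.val := rfl
      have h6 : (evenEmb d₂).val = 2*d₂.val+1 := rfl
      omega
    have hd₁c : d₁.val < c.val := by
      have h1 : V.min' hVne ≤ Gc.min' hGcne := ((embraces_iff hVne hGcne).1 hembV).1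
      obtain ⟨g₀, hg₀Pc, hg₀e⟩ := exists_rep_min (Q := Pc) (f := oddEmb) hGcne
      have h3 : V.min' hVne = evenEmb d₁ := by
        have : V.min' hVne = (D.image evenEmb).min' hDne := by congr 1 <;> rw [hVeq]
        rw [this, hd₁e]
      have hg₀0 : 0 < g₀.val := by
        by_contra hz
        have hz0 : g₀.val = 0 := by omega
        exact h0n ((Fin.ext hz0 : g₀ = (⟨0, hn⟩ : Fin n)) ▸ hg₀Pc)
      have hg₀c : g₀.val ≤ c.val := Fin.le_def.1 (hA1 g₀ hg₀Pc)
      have h4 := Fin.le_def.1 h1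
      rw [h3] at h4
      have hGcmin : Gc.min' hGcne = oddEmb g₀ := by
        have : Gc.min' hGcne = (Pc.image oddEmb).min' hGcne := rfl
        rw [this, hg₀e]
      rw [hGcmin] at h4
      have h5 : (oddEmb g₀).val = 2*g₀.val := rfl
      have h6 : (evenEmb d₁).val = 2*d₁.val+1 := rfl
      omega
    -- now compare D with B
    by_cases hd₂B : d₂ ∈ B
    · have hDB : D = B := parts_eq hDmem hBmem hd₂D hd₂B
      have := Fin.le_def.1 (hmin d₁ (hDB ▸ hd₁D))
      omega
    · have hcd₂ : c.val < d₂.val := by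
        rcases eq_or_lt_of_le hd₂c with heq | hlt
        · exact absurd ((Fin.ext heq : c = d₂) ▸ hcB) hd₂B
        · exact hlt
      have hd₂b : d₂.val < b.val := by
        have h1 := d₂.isLt
        rcases Nat.lt_or_ge d₂.val b.val with h | h
        · exact h
        · exact absurd ((Fin.ext (by omega) : d₂ = b) ▸ hbB) hd₂B
      exact hd₂B ((crossNC hρ hDmem hBmem hd₁D hd₂D hcB hbB (Fin.lt_def.2 hd₁c)
        (Fin.lt_def.2 hcd₂) (Fin.lt_def.2 hd₂b)) ▸ hd₂D)
  have := assocFun_eq_of_wrap (P := π) (b := c) (s := ⟨0, hn⟩) h0mem hA1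
    (fun x _ => Fin.le_def.2 (Nat.zero_le _))
  rw [this]

end Main2

lemma finRotate_val {n : ℕ} (b : Fin n) :
    (finRotate n b).val = if b.val + 1 < n then b.val + 1 else 0 := by
  cases n with
  | zero => exact b.elim0
  | succ m =>
    rw [finRotate_succ_apply, Fin.val_add_one]
    by_cases h : b = Fin.last m
    · subst h
      have hval : (Fin.last m).val = m := rfl
      rw [if_pos rfl, hval, if_neg (by omega)]
    · have hlt : b.val < m := by
        have h2 := b.isLt
        rcases Nat.lt_or_ge b.val m with h1 | h1
        · exact h1
        · exact absurd (Fin.ext (show b.val = m by omega) : b = Fin.last m) h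
      rw [if_neg h, if_pos (by omega)]

/-- Lemma 6.8: let `π, ρ ∈ NC(n)` be such that
`θ = π^(odd) ∪ ρ^(even)` is in `NC(2n)`.  If `θ` has exactly two outer blocks and
the parent of every non-outer block of `θ` has parity opposite from the block itself,
then `ρ = K(π)`. -/
theorem statement15 (n : ℕ) (hn : 0 < n) (π ρ : FP n) (hπ : IsNC π) (hρ : IsNC ρ)
    (θ : FP (2*n)) (hθ : IsOddEvenJoin π ρ θ) (hθNC : IsNC θ)
    (h2 : ExactlyTwoOuterBlocks θ)
    (hpar : ∀ A ∈ θ.parts, ¬ IsOuter θ A → ∀ P, IsParent θ A P → OppositeParity A P) :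
    IsKrewerasPair π ρ := by
  refine ⟨assocPerm π, assocPerm ρ, isAssocPerm_assocPerm π, isAssocPerm_assocPerm ρ, ?_⟩
  apply Equiv.ext
  intro b
  have key : assocFun π (assocFun ρ b) = finRotate n b := by
    rcases assocFun_spec ρ b with ⟨h1, h2'⟩ | ⟨h3, h4⟩
    · have hval := caseI hθ hπ hρ hθNC hpar (assocFun_mem ρ b) h1 h2'
      refine Fin.ext ?_
      rw [finRotate_val, if_pos ?_]
      · exact hval
      · have ha := Fin.lt_def.1 h1
        have hb := (assocFun ρ b).isLt
        omega
    · rcases Nat.lt_or_ge (b.val + 1) n with hb | hb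
      · have hval := caseII1 hθ hπ hρ hθNC h2 hpar hn h4.1 h4.2 h3.2 hb
        refine Fin.ext ?_
        rw [finRotate_val, if_pos hb]
        exact hval
      · have hbn : b.val = n - 1 := by have := b.isLt; omega
        have hval := caseII2 hθ hπ hρ hθNC h2 hpar hn h4.1 h4.2 h3.2 hbn
        refine Fin.ext ?_
        rw [finRotate_val, if_neg (by omega)]
        exact hval
  rw [Equiv.Perm.mul_apply, Equiv.Perm.inv_def, eq_comm, Equiv.symm_apply_eq]
  exact key.symm
end BBP
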